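/- Let A be a unital ring of stable rank n with elementary rank at most n−1. For every unital ring extension 0 → I → B → A → 0 (B unital, I a two-sided ideal of B with B/I ≅ A) such that the stable rank of I is at most n, the stable rank of B equals n. -/

import Mathlib

open scoped BigOperators

variable {R : Type*}

/-- A column is unimodular if its entries admit a left Bezout relation summing to `1`. -/
def Unimodular [Ring R] {m : ℕ} (b : Fin m → R) : Prop :=
  ∃ a : Fin m → R, ∑ i, a i * b i = 1

/-- An `(n+1)`-column is reducible if adding left multiples of the last entry to the first
`n` entries yields a unimodular `n`-column. -/
def Reducible [Ring R] {n : ℕ} (b : Fin (n + 1) → R) : Prop :=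
  ∃ v : Fin n → R, Unimodular (fun i : Fin n => b i.castSucc + v i * b (Fin.last n))

/-- The stable range condition: every unimodular column of length `> n` is reducible. -/
def SRleq (R : Type*) [Ring R] (n : ℕ) : Prop :=
  ∀ m : ℕ, n ≤ m → ∀ b : Fin (m + 1) → R, Unimodular b → Reducible b

/-- The Bass stable rank, as an element of `ℕ∞`. -/
noncomputable def sr (R : Type*) [Ring R] : ℕ∞ :=
  sInf {c : ℕ∞ | ∃ n : ℕ, c = n ∧ SRleq R n}

/-- Elementary matrices (transvections). -/
def IsElemMat [Ring R] {t : ℕ} (M : Matrix (Fin t) (Fin t) R) : Prop :=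
  ∃ (i j : Fin t) (c : R), i ≠ j ∧ M = 1 + Matrix.single i j c

/-- `ERleq R k` : for every `t ≥ k + 1`, the elementary group `E_t(R)` acts transitively on
unimodular `t`-columns. -/
def ERleq (R : Type*) [Ring R] (k : ℕ) : Prop :=
  ∀ t : ℕ, k + 1 ≤ t → ∀ b c : Fin t → R, Unimodular b → Unimodular c →
    ∃ L : List (Matrix (Fin t) (Fin t) R), (∀ M ∈ L, IsElemMat M) ∧ L.prod.mulVec b = c

/-- The elementary rank, as an element of `ℕ∞`. -/
noncomputable def er (R : Type*) [Ring R] : ℕ∞ :=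
  sInf {c : ℕ∞ | ∃ k : ℕ, c = k ∧ ERleq R k}

/-- Vaserstein's `I`-unimodular columns relative to a two-sided ideal `I` of `R`:
the first entry is congruent to `1` mod `I`, the others lie in `I`, and there is a Bezout
relation of the same shape. -/
def RelUnimodular [Ring R] (I : TwoSidedIdeal R) {m : ℕ} (b : Fin (m + 1) → R) : Prop :=
  b 0 - 1 ∈ I ∧ (∀ i, i ≠ 0 → b i ∈ I) ∧
    ∃ a : Fin (m + 1) → R, (a 0 - 1 ∈ I) ∧ (∀ i, i ≠ 0 → a i ∈ I) ∧ ∑ i, a i * b i = 1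

def RelReducible [Ring R] (I : TwoSidedIdeal R) {m : ℕ} (b : Fin (m + 2) → R) : Prop :=
  ∃ v : Fin (m + 1) → R, (∀ i, v i ∈ I) ∧
    RelUnimodular I (fun i : Fin (m + 1) => b i.castSucc + v i * b (Fin.last (m + 1)))

/-- Relative (Vaserstein) stable rank `≤ n` for a two-sided ideal: every `I`-unimodular
column of length at least `n + 1` is reducible. -/
def RelSRleq [Ring R] (I : TwoSidedIdeal R) (n : ℕ) : Prop :=
  ∀ m : ℕ, n ≤ m + 1 → ∀ b : Fin (m + 2) → R, RelUnimodular I b → RelReducible I b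

/-- The relative stable rank of a two-sided ideal, as an element of `ℕ∞`. -/
noncomputable def relSr [Ring R] (I : TwoSidedIdeal R) : ℕ∞ :=
  sInf {c : ℕ∞ | ∃ n : ℕ, c = n ∧ RelSRleq I n}

/- ### Auxiliary lemmas -/

lemma unimod_map' {A B : Type*} [Ring A] [Ring B] (f : B →+* A) {m : ℕ} {b : Fin m → B}
    (h : Unimodular b) : Unimodular (fun i => f (b i)) := by
  obtain ⟨a, ha⟩ := h
  exact ⟨fun i => f (a i), by rw [← map_one f, ← ha, map_sum]; simp [map_mul]⟩

lemma SRleq_mono [Ring R] {k k' : ℕ} (h : SRleq R k) (hkk' : k ≤ k') : SRleq R k' :=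
  fun m hm => h m (hkk'.trans hm)

lemma unimod_of_mulVec [Ring R] {k : ℕ} (M : Matrix (Fin k) (Fin k) R) {w : Fin k → R}
    (h : Unimodular (M.mulVec w)) : Unimodular w := by
  obtain ⟨a, ha⟩ := h
  refine ⟨Matrix.vecMul a M, ?_⟩
  have h2 : dotProduct a (M.mulVec w) = 1 := ha
  rw [Matrix.dotProduct_mulVec] at h2
  exact h2

lemma unimod_snoc_mulVec [Ring R] {k : ℕ} {M M' : Matrix (Fin k) (Fin k) R}
    (hinv : M' * M = 1) {x : Fin k → R} {y : R}
    (h : Unimodular (Fin.snoc x y : Fin (k+1) → R)) :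
    Unimodular (Fin.snoc (M.mulVec x) y : Fin (k+1) → R) := by
  obtain ⟨a, ha⟩ := h
  rw [Fin.sum_univ_castSucc] at ha
  simp only [Fin.snoc_castSucc, Fin.snoc_last] at ha
  refine ⟨Fin.snoc (Matrix.vecMul (fun i => a i.castSucc) M') (a (Fin.last k)), ?_⟩
  rw [Fin.sum_univ_castSucc]
  simp only [Fin.snoc_castSucc, Fin.snoc_last]
  have key : ∑ i, Matrix.vecMul (fun i => a i.castSucc) M' i * M.mulVec x i
      = ∑ i, a i.castSucc * x i := by
    have h3 : dotProduct (Matrix.vecMul (fun i => a i.castSucc) M') (M.mulVec x)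
        = dotProduct (fun i => a i.castSucc) x := by
      rw [Matrix.dotProduct_mulVec, Matrix.vecMul_vecMul, hinv, Matrix.vecMul_one]
    exact h3
  rw [key, ha]

lemma map_mulVec' {A B : Type*} [Ring A] [Ring B] (f : B →+* A) {k : ℕ}
    (M : Matrix (Fin k) (Fin k) B) (x : Fin k → B) :
    (fun i => f ((M.mulVec x) i)) = (f.mapMatrix M).mulVec (fun i => f (x i)) := by
  funext i
  simp [Matrix.mulVec, dotProduct, map_sum, map_mul]

lemma lift_elem_list {A B : Type*} [Ring A] [Ring B] (f : B →+* A) (hf : Function.Surjective f)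
    {t : ℕ} (L : List (Matrix (Fin t) (Fin t) A)) (hL : ∀ M ∈ L, IsElemMat M) :
    ∃ E E' : Matrix (Fin t) (Fin t) B, E * E' = 1 ∧ E' * E = 1 ∧ f.mapMatrix E = L.prod := by
  induction L with
  | nil => exact ⟨1, 1, by simp, by simp, by simp⟩
  | cons M L' ih =>
    obtain ⟨E, E', h1, h2, h3⟩ := ih (fun N hN => hL N (List.mem_cons_of_mem _ hN))
    obtain ⟨i, j, c, hij, hM⟩ := hL M List.mem_cons_self
    obtain ⟨d, hd⟩ := hf c
    have hNN : Matrix.single i j d * Matrix.single i j d = 0 :=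
      Matrix.single_mul_single_of_ne (c := d) i j i (Ne.symm hij) d
    refine ⟨(1 + Matrix.single i j d) * E, E' * (1 - Matrix.single i j d),
        ?_, ?_, ?_⟩
    · have hthis : (1 + Matrix.single i j d) * (1 - Matrix.single i j d) = 1 := by
        simp [mul_sub, add_mul, hNN]
      calc (1 + Matrix.single i j d) * E * (E' * (1 - Matrix.single i j d))
          = (1 + Matrix.single i j d) * (E * E') * (1 - Matrix.single i j d) := by
            noncomm_ring
        _ = 1 := by rw [h1, mul_one, hthis]
    · have hthis : (1 - Matrix.single i j d) * (1 + Matrix.single i j d) = 1 := by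
        simp [sub_mul, mul_add, hNN]
      calc E' * (1 - Matrix.single i j d) * ((1 + Matrix.single i j d) * E)
          = E' * ((1 - Matrix.single i j d) * (1 + Matrix.single i j d)) * E := by
            noncomm_ring
        _ = 1 := by rw [hthis, mul_one, h2]
    · rw [map_mul, h3, List.prod_cons, hM]
      congr 1
      rw [map_add, map_one]
      congr 1
      ext a b
      simp only [RingHom.mapMatrix_apply, Matrix.map_apply, Matrix.single,
        Matrix.of_apply]
      split_ifs with h
      · exact hd
      · exact map_zero f

lemma relUnimod_of_unimod {A B : Type*} [Ring A] [Ring B] (f : B →+* A) {k : ℕ}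
    (x : Fin (k + 1) → B) (h0 : f (x 0) = 1) (hi : ∀ i, i ≠ 0 → f (x i) = 0)
    (hu : Unimodular x) : RelUnimodular (TwoSidedIdeal.ker f) x := by
  obtain ⟨a, ha⟩ := hu
  set s : B := 1 - a 0 * x 0 with hs
  have hsum : a 0 * x 0 + ∑ i ∈ Finset.univ.erase 0, a i * x i = 1 := by
    have h' := Finset.add_sum_erase Finset.univ (fun i => a i * x i)
      (Finset.mem_univ (0 : Fin (k + 1)))
    simpa [ha] using h'
  have hserase : s = ∑ i ∈ Finset.univ.erase 0, a i * x i := by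
    rw [hs]; exact (eq_sub_of_add_eq' hsum).symm
  have hfs : f s = 0 := by
    rw [hserase, map_sum]
    refine Finset.sum_eq_zero fun i hi' => ?_
    rw [map_mul, hi i (Finset.ne_of_mem_erase hi'), mul_zero]
  have hfa0 : f (a 0) = 1 := by
    have h1 : f (a 0 * x 0) = f (1 - s) := by rw [hs, sub_sub_cancel]
    rw [map_mul, h0, mul_one, map_sub, map_one, hfs, sub_zero] at h1
    exact h1
  refine ⟨by rw [TwoSidedIdeal.mem_ker, map_sub, h0, map_one, sub_self],
    fun i hi' => by rw [TwoSidedIdeal.mem_ker, hi i hi'],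
    fun i => if i = 0 then (1 + s) * a 0 else s * a i, ?_, ?_, ?_⟩
  · show (if (0 : Fin (k + 1)) = 0 then (1 + s) * a 0 else s * a 0) - 1 ∈ _
    rw [if_pos rfl, TwoSidedIdeal.mem_ker, map_sub, map_mul, map_add, map_one, hfs, hfa0]
    simp
  · intro i hi'
    show (if i = 0 then (1 + s) * a 0 else s * a i) ∈ _
    rw [if_neg hi', TwoSidedIdeal.mem_ker, map_mul, hfs, zero_mul]
  · have hsplit : ∑ i, (if i = 0 then (1 + s) * a 0 else s * a i) * x i
        = (1 + s) * a 0 * x 0 + ∑ i ∈ Finset.univ.erase 0, s * (a i * x i) := by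
      rw [← Finset.add_sum_erase _ (fun i => (if i = 0 then (1 + s) * a 0 else s * a i) * x i)
        (Finset.mem_univ 0), if_pos rfl]
      congr 1
      refine Finset.sum_congr rfl fun i hi' => ?_
      rw [if_neg (Finset.ne_of_mem_erase hi'), mul_assoc]
    rw [hsplit, ← Finset.mul_sum, ← hserase]
    have hax : a 0 * x 0 = 1 - s := (sub_sub_cancel 1 (a 0 * x 0)).symm
    rw [mul_assoc, hax]
    noncomm_ring

lemma srleq_quotient {A B : Type*} [Ring A] [Ring B] (f : B →+* A) (hf : Function.Surjective f)
    (k : ℕ) (h : SRleq B k) : SRleq A k := by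
  intro m hm b hb
  obtain ⟨a, ha⟩ := hb
  choose bl hbl using fun i => hf (b i)
  choose al hal using fun i => hf (a i)
  set s : B := ∑ i, al i * bl i with hs
  have hfs : f (1 - s) = 0 := by
    rw [map_sub, map_one, hs, map_sum]
    simp only [map_mul, hbl, hal]
    rw [ha, sub_self]
  have hY : Unimodular (Fin.snoc bl (1 - s) : Fin (m + 2) → B) := by
    refine ⟨Fin.snoc al 1, ?_⟩
    rw [Fin.sum_univ_castSucc]
    simp [Fin.snoc_castSucc, Fin.snoc_last, ← hs]
  obtain ⟨v, hv⟩ := h (m + 1) (by omega) _ hY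
  simp only [Fin.snoc_castSucc, Fin.snoc_last] at hv
  obtain ⟨w, hw⟩ := h m hm _ hv
  have this1 := unimod_map' f hw
  have heq : (fun i => f ((fun i => bl i + v i * (1 - s)) i.castSucc
        + w i * (fun i => bl i + v i * (1 - s)) (Fin.last m)))
      = (fun i : Fin m => b i.castSucc + f (w i) * b (Fin.last m)) := by
    funext i
    simp only [map_add, map_mul, hbl, hfs, mul_zero, add_zero]
  rw [heq] at this1
  exact ⟨fun i => f (w i), this1⟩

/-- Lemma 1.8(1): if `A` has stable rank `n` and elementary rank at most `n - 1`, then for any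
unital extension `0 → I → B → A → 0` with `sr(I) ≤ n` (relative stable rank of the kernel
ideal), the stable rank of `B` equals `n`. -/
theorem sr_closed_by_extensions
    {A B : Type*} [Ring A] [Ring B] (n : ℕ) (hn : 1 ≤ n)
    (hsr : sr A = n) (her : er A ≤ ((n - 1 : ℕ) : ℕ∞))
    (f : B →+* A) (hf : Function.Surjective f)
    (hI : RelSRleq (TwoSidedIdeal.ker f) n) :
    sr B = n := by
  -- extract `SRleq A n`
  have hSA : SRleq A n := by
    by_contra hcon
    have hge : ((n : ℕ∞) + 1) ≤ sr A := by
      apply le_sInf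
      rintro c ⟨k, rfl, hk⟩
      have hkn : ¬ k ≤ n := fun hle => hcon (SRleq_mono hk hle)
      exact_mod_cast (by omega : n + 1 ≤ k)
    rw [hsr] at hge
    have : (n : ℕ∞) < (n : ℕ∞) + 1 := by
      exact_mod_cast (by omega : n < n + 1)
    exact absurd hge (not_le.mpr this)
  -- extract elementary rank witness
  have hEA : ∃ k : ℕ, k + 1 ≤ n ∧ ERleq A k := by
    by_contra hcon
    push_neg at hcon
    have hge : (((n - 1 : ℕ) : ℕ∞) + 1) ≤ er A := by
      apply le_sInf
      rintro c ⟨k, rfl, hk⟩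
      have hkn : ¬ k + 1 ≤ n := fun hle => hcon k hle hk
      exact_mod_cast (by omega : (n - 1) + 1 ≤ k)
    have hlt : ((n - 1 : ℕ) : ℕ∞) < ((n - 1 : ℕ) : ℕ∞) + 1 := by
      exact_mod_cast (by omega : n - 1 < (n - 1) + 1)
    exact absurd (hge.trans her) (not_le.mpr hlt)
  -- the main part : `SRleq B n`
  have hSB : SRleq B n := by
    intro m hm b hb
    obtain ⟨m₁, rfl⟩ : ∃ m₁, m = m₁ + 1 := ⟨m - 1, by omega⟩
    -- Step 1: reduce the image column over A
    have hfb : Unimodular (fun i => f (b i)) := unimod_map' f hb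
    obtain ⟨ub, hub⟩ := hSA (m₁ + 1) hm _ hfb
    choose u hu using fun i => hf (ub i)
    set c : Fin (m₁ + 1) → B := fun i => b i.castSucc + u i * b (Fin.last (m₁ + 1)) with hc
    have hfc : Unimodular (fun i => f (c i)) := by
      have heq : (fun i => f (c i)) = (fun i : Fin (m₁ + 1) =>
          (fun j => f (b j)) i.castSucc + ub i * (fun j => f (b j)) (Fin.last (m₁ + 1))) := by
        funext i
        simp [hc, map_add, map_mul, hu]
      rw [heq]
      exact hub
    -- Step 2: (c, b_last) is unimodular over B
    obtain ⟨a, ha⟩ := hb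
    rw [Fin.sum_univ_castSucc] at ha
    have hCB : Unimodular (Fin.snoc c (b (Fin.last (m₁ + 1))) : Fin (m₁ + 2) → B) := by
      refine ⟨Fin.snoc (fun i => a i.castSucc)
        (a (Fin.last (m₁ + 1)) - ∑ i, a i.castSucc * u i), ?_⟩
      rw [Fin.sum_univ_castSucc]
      simp only [Fin.snoc_castSucc, Fin.snoc_last, hc]
      rw [← ha, sub_mul, Finset.sum_mul]
      have e1 : ∑ i : Fin (m₁ + 1), a i.castSucc * (b i.castSucc + u i * b (Fin.last (m₁ + 1)))
          = ∑ i : Fin (m₁ + 1), a i.castSucc * b i.castSucc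
            + ∑ i : Fin (m₁ + 1), a i.castSucc * u i * b (Fin.last (m₁ + 1)) := by
        rw [← Finset.sum_add_distrib]
        refine Finset.sum_congr rfl fun i _ => by rw [mul_add, mul_assoc]
      rw [e1]
      abel
    -- Step 3: elementary reduction to (1,0,...,0) mod the kernel
    obtain ⟨k, hk1, hEk⟩ := hEA
    have he₁ : Unimodular (fun i : Fin (m₁ + 1) => if i = 0 then (1 : A) else 0) := by
      refine ⟨fun i => if i = 0 then (1 : A) else 0, ?_⟩
      simp [ite_mul, Finset.sum_ite_eq]
    obtain ⟨L, hLel, hLeq⟩ := hEk (m₁ + 1) (by omega) _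
      (fun i : Fin (m₁ + 1) => if i = 0 then (1 : A) else 0) hfc he₁
    obtain ⟨E, E', hEE', hE'E, hmapE⟩ := lift_elem_list f hf L hLel
    set d : Fin (m₁ + 1) → B := E.mulVec c with hd
    have hfd : (fun i => f (d i)) = (fun i : Fin (m₁ + 1) => if i = 0 then (1 : A) else 0) := by
      rw [hd, map_mulVec' f E c, hmapE, hLeq]
    have hd0 : f (d 0) = 1 := by
      have h' := congrFun hfd 0
      simpa using h'
    have hdi : ∀ i : Fin (m₁ + 1), i ≠ 0 → f (d i) = 0 := by
      intro i hi
      have h' := congrFun hfd i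
      simpa [hi] using h'
    set y : B := 1 - d 0 with hy
    have hfy : f y = 0 := by rw [hy, map_sub, map_one, hd0, sub_self]
    have hDB : Unimodular (Fin.snoc d (b (Fin.last (m₁ + 1))) : Fin (m₁ + 2) → B) :=
      unimod_snoc_mulVec hE'E hCB
    obtain ⟨α, hα⟩ := hDB
    rw [Fin.sum_univ_castSucc] at hα
    simp only [Fin.snoc_castSucc, Fin.snoc_last] at hα
    set am : B := α (Fin.last (m₁ + 1)) with ham
    set xm : B := y * (am * b (Fin.last (m₁ + 1))) with hxm
    have hamb : am * b (Fin.last (m₁ + 1)) = 1 - ∑ i, α i.castSucc * d i :=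
      eq_sub_of_add_eq' hα
    set X : Fin (m₁ + 2) → B := Fin.snoc d xm with hX
    have hXuni : Unimodular X := by
      refine ⟨Fin.snoc (fun i => (if i = (0 : Fin (m₁ + 1)) then 1 else 0) + y * α i.castSucc)
        1, ?_⟩
      rw [hX, Fin.sum_univ_castSucc]
      simp only [Fin.snoc_castSucc, Fin.snoc_last, one_mul]
      have e1 : ∑ i, ((if i = (0 : Fin (m₁ + 1)) then 1 else 0) + y * α i.castSucc) * d i
          = d 0 + y * ∑ i, α i.castSucc * d i := by
        simp only [add_mul, ite_mul, one_mul, zero_mul, mul_assoc,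
          Finset.sum_add_distrib, Finset.sum_ite_eq, Finset.sum_ite_eq', Finset.mem_univ,
          if_true, ← Finset.mul_sum]
      rw [e1, hxm, hamb, hy]
      noncomm_ring
    have hXrel : RelUnimodular (TwoSidedIdeal.ker f) X := by
      refine relUnimod_of_unimod f X ?_ ?_ hXuni
      · have hX0 : X 0 = d 0 := by
          have h' : ((0 : Fin (m₁ + 1)).castSucc) = (0 : Fin (m₁ + 2)) := by simp
          rw [hX, ← h', Fin.snoc_castSucc]
        rw [hX0, hd0]
      · intro i hi
        rcases Fin.eq_castSucc_or_eq_last i with ⟨j, rfl⟩ | rfl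
        · have hj : j ≠ 0 := by
            intro hj0
            apply hi
            rw [hj0]
            simp
          rw [hX, Fin.snoc_castSucc]
          exact hdi j hj
        · rw [hX, Fin.snoc_last, hxm, map_mul, hfy, zero_mul]
    obtain ⟨v, hvI, hrel⟩ := hI m₁ (by omega) X hXrel
    obtain ⟨-, -, av, -, -, hav⟩ := hrel
    have hzuni : Unimodular (fun i : Fin (m₁ + 1) =>
        X i.castSucc + v i * X (Fin.last (m₁ + 1))) := ⟨av, hav⟩
    simp only [hX, Fin.snoc_castSucc, Fin.snoc_last] at hzuni
    set g : Fin (m₁ + 1) → B := E'.mulVec (fun i => v i * (y * am)) with hg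
    have hEg : E.mulVec g = fun i => v i * (y * am) := by
      rw [hg, Matrix.mulVec_mulVec, hEE', Matrix.one_mulVec]
    have hfactor : (fun i : Fin (m₁ + 1) => d i + v i * xm)
        = E.mulVec (fun i => c i + g i * b (Fin.last (m₁ + 1))) := by
      funext i
      have hsplit : E.mulVec (fun j => c j + g j * b (Fin.last (m₁ + 1))) i
          = E.mulVec c i + E.mulVec (fun j => g j * b (Fin.last (m₁ + 1))) i := by
        simp [Matrix.mulVec, dotProduct, mul_add, Finset.sum_add_distrib]
      have h2 : E.mulVec (fun j => g j * b (Fin.last (m₁ + 1))) i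
          = (E.mulVec g i) * b (Fin.last (m₁ + 1)) := by
        simp [Matrix.mulVec, dotProduct, Finset.sum_mul, mul_assoc]
      rw [hsplit, h2, hEg, ← hd, hxm]
      noncomm_ring
    rw [hfactor] at hzuni
    have hred := unimod_of_mulVec E hzuni
    refine ⟨fun i => u i + g i, ?_⟩
    have heq2 : (fun i : Fin (m₁ + 1) => c i + g i * b (Fin.last (m₁ + 1)))
        = fun i : Fin (m₁ + 1) => b i.castSucc + (u i + g i) * b (Fin.last (m₁ + 1)) := by
      funext i
      rw [hc]
      noncomm_ring
    rwa [heq2] at hred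
  -- conclusion
  have hlow : ∀ k : ℕ, SRleq B k → (n : ℕ∞) ≤ k := by
    intro k hk
    have hq := srleq_quotient f hf k hk
    calc (n : ℕ∞) = sr A := hsr.symm
      _ ≤ k := sInf_le ⟨k, rfl, hq⟩
  refine le_antisymm (sInf_le ⟨n, rfl, hSB⟩) (le_sInf ?_)
  rintro c ⟨k, rfl, hk⟩
  exact hlow k hk
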